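/- arXiv:1402.2598 — 3 statements merged into one kernel-verified Lean document; each statement's English description precedes it below -/
import Mathlib

section
/- Let m ≥ 2, let S_1, …, S_m be real numbers and Y_1, …, Y_m be nonnegative real numbers with order statistics Y_{(1)} ≥ Y_{(2)} ≥ ⋯ ≥ Y_{(m)}. Then for every 1 ≤ k < m, 0 ≤ max_{1≤i≤m}(S_i + Y_i) − max_{1≤i≤m}( S_i + Y_i · 1{Y_i ≥ Y_{(k)}} ) ≤ Y_{(k+1)}. -/
/-- Truncating all but the `k` largest perturbations changes the perturbed maximum
by at most the `(k+1)`-st largest perturbation: if `Y_{(1)} ≥ ⋯ ≥ Y_{(m)}` are the order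
statistics of the nonnegative `Y_1, …, Y_m` (realized here by a permutation `σ` making
`Y ∘ σ` nonincreasing, so that `Y_{(j)} = Y(σ(j-1))` with zero-based indexing), then for
every `1 ≤ k < m`,
`0 ≤ max_i (S_i + Y_i) - max_i (S_i + Y_i · 1{Y_i ≥ Y_{(k)}}) ≤ Y_{(k+1)}`. -/
theorem truncation_error_bounded_by_next_order_statistic
    (m : ℕ) (hm : 2 ≤ m) (S : Fin m → ℝ) (Y : Fin m → ℝ) (hY : ∀ i, 0 ≤ Y i)
    (σ : Equiv.Perm (Fin m)) (hσ : Antitone (Y ∘ σ))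
    (k : ℕ) (hk1 : 1 ≤ k) (hkm : k < m) :
    0 ≤ (⨆ i : Fin m, (S i + Y i)) -
        (⨆ i : Fin m, (S i + if Y (σ ⟨k - 1, by omega⟩) ≤ Y i then Y i else 0)) ∧
    (⨆ i : Fin m, (S i + Y i)) -
        (⨆ i : Fin m, (S i + if Y (σ ⟨k - 1, by omega⟩) ≤ Y i then Y i else 0)) ≤
      Y (σ ⟨k, hkm⟩) := by
  have hmpos : 0 < m := by omega
  haveI : Nonempty (Fin m) := ⟨⟨0, hmpos⟩⟩
  set T := Y (σ ⟨k - 1, by omega⟩) with hT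
  set g : Fin m → ℝ := fun i => S i + if T ≤ Y i then Y i else 0 with hg
  set f : Fin m → ℝ := fun i => S i + Y i with hf
  have hbf : BddAbove (Set.range f) := Set.Finite.bddAbove (Set.finite_range f)
  have hbg : BddAbove (Set.range g) := Set.Finite.bddAbove (Set.finite_range g)
  have hc : 0 ≤ Y (σ ⟨k, hkm⟩) := hY _
  have hgf : ∀ i, g i ≤ f i := by
    intro i
    simp only [hg, hf]
    gcongr
    split <;> simp [hY i]
  have h1 : (⨆ i, g i) ≤ ⨆ i, f i :=
    ciSup_mono hbf hgf
  have hkey : ∀ i, f i ≤ g i + Y (σ ⟨k, hkm⟩) := by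
    intro i
    by_cases h : T ≤ Y i
    · simp only [hg, hf, if_pos h]
      linarith
    · push_neg at h
      -- Y i < T, so i = σ j with j ≥ k, hence Y i ≤ Y (σ k)
      obtain ⟨j, rfl⟩ : ∃ j, σ j = i := ⟨σ.symm i, σ.apply_symm_apply i⟩
      have hjk : (⟨k, hkm⟩ : Fin m) ≤ j := by
        by_contra hlt
        push_neg at hlt
        have : j ≤ (⟨k - 1, by omega⟩ : Fin m) := by
          have := hlt
          simp only [Fin.lt_def, Fin.le_def] at *
          omega
        have := hσ this
        simp only [Function.comp] at this
        exact absurd this (by simpa [hT] using h.not_ge)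
      have hY2 : Y (σ j) ≤ Y (σ ⟨k, hkm⟩) := hσ hjk
      simp only [hg, hf, if_neg (not_le.mpr h)]
      linarith
  have h2 : (⨆ i, f i) ≤ (⨆ i, g i) + Y (σ ⟨k, hkm⟩) := by
    apply ciSup_le
    intro i
    exact le_trans (hkey i) (by gcongr; exact le_ciSup hbg i)
  exact ⟨by linarith, by linarith⟩
end

section
/- Fix k ∈ ℕ and H-irrelevant data as follows: let x : [0,1] → ℝ be continuous; let y_1, …, y_k > 0 and u_1, …, u_k ∈ (0,1) be pairwise distinct; for each n, let x^{(n)} : [0,1] → ℝ be càdlàg with x^{(n)} → x uniformly on [0,1], and let y_i^{(n)} > 0, u_i^{(n)} ∈ (0,1) (pairwise distinct for each n) with y_i^{(n)} → y_i and u_i^{(n)} → u_i as n → ∞, for i = 1, …, k. Define h(t) = sup_{s∈[0,t]} ( x(s) + Σ_{i=1}^k y_i · 1{s = u_i} ) and h^{(n)}(t) = sup_{s∈[0,t]} ( x^{(n)}(s) + Σ_{i=1}^k y_i^{(n)} · 1{s = u_i^{(n)}} ). Then d(h^{(n)}, h) → 0 as n → ∞, where d is the Skorohod J1 metric on D[0,1].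 -/
open Filter Topology

noncomputable section

/-- A real path is càdlàg on `[0,1]`: right-continuous on `[0,1)` and with left limits
on `(0,1]`. -/
def Cadlag01 (f : ℝ → ℝ) : Prop :=
  (∀ t ∈ Set.Ico (0:ℝ) 1, Filter.Tendsto f (nhdsWithin t (Set.Ici t)) (nhds (f t))) ∧
  (∀ t ∈ Set.Ioc (0:ℝ) 1, ∃ l, Filter.Tendsto f (nhdsWithin t (Set.Iio t)) (nhds l))

/-- The Skorohod `J1` distance on paths over `[0,1]`:
`d(f,g) = inf_λ max( sup_{t∈[0,1]} |λ(t) - t|, sup_{t∈[0,1]} |f(t) - g(λ(t))| )`,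
the infimum over all continuous strictly increasing bijections `λ : [0,1] → [0,1]`. -/
noncomputable def skorohodDist (f g : ℝ → ℝ) : ℝ :=
  sInf {r : ℝ | ∃ lam : ℝ → ℝ,
    ContinuousOn lam (Set.Icc 0 1) ∧ StrictMonoOn lam (Set.Icc 0 1) ∧
    Set.BijOn lam (Set.Icc 0 1) (Set.Icc 0 1) ∧
    r = max (⨆ s : Set.Icc (0:ℝ) 1, |lam s.1 - s.1|)
            (⨆ s : Set.Icc (0:ℝ) 1, |f s.1 - g (lam s.1)|)}



namespace SkoGlue

/-- two-piece linear map on `[c,d]` sending `p ↦ q`, fixing `c,d`. -/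
noncomputable def pl (c d p q t : ℝ) : ℝ :=
  if t ≤ p then c + (q - c) / (p - c) * (t - c) else q + (d - q) / (d - p) * (t - p)

variable {c d p q : ℝ}

lemma pl_c (hcp : c < p) : pl c d p q c = c := by
  simp [pl, hcp.le]

lemma pl_p (hcp : c < p) : pl c d p q p = q := by
  simp only [pl, le_refl, if_pos]
  rw [div_mul_cancel₀ _ (show p - c ≠ 0 by linarith)]
  ring

lemma pl_d (hpd : p < d) : pl c d p q d = d := by
  rw [pl, if_neg (not_le.2 hpd), div_mul_cancel₀ _ (show d - p ≠ 0 by linarith)]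
  ring

lemma pl_strictMonoOn (hcp : c < p) (hpd : p < d) (hcq : c < q) (hqd : q < d) :
    StrictMonoOn (pl c d p q) (Set.Icc c d) := by
  have h1 : (0:ℝ) < (q - c) / (p - c) := div_pos (by linarith) (by linarith)
  have h2 : (0:ℝ) < (d - q) / (d - p) := div_pos (by linarith) (by linarith)
  have hqc : (q - c) / (p - c) * (p - c) = q - c := div_mul_cancel₀ _ (by linarith)
  intro a _ b _ hab
  rcases le_or_gt a p with ha | ha <;> rcases le_or_gt b p with hb | hb
  · simp only [pl, if_pos ha, if_pos hb]
    nlinarith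
  · simp only [pl, if_pos ha, if_neg (not_le.2 hb)]
    nlinarith
  · linarith
  · simp only [pl, if_neg (not_le.2 ha), if_neg (not_le.2 hb)]
    nlinarith

lemma pl_mem (hcp : c < p) (hpd : p < d) (hcq : c < q) (hqd : q < d)
    {t : ℝ} (ht : t ∈ Set.Icc c d) : pl c d p q t ∈ Set.Icc c d := by
  have hm := (pl_strictMonoOn hcp hpd hcq hqd).monotoneOn
  have hcd : c ≤ d := by linarith
  constructor
  · have := hm (Set.left_mem_Icc.2 hcd) ht ht.1
    rwa [pl_c hcp] at this
  · have := hm ht (Set.right_mem_Icc.2 hcd) ht.2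
    rwa [pl_d hpd] at this

lemma pl_continuous (hcp : c < p) (hpd : p < d) : Continuous (pl c d p q) := by
  apply Continuous.if_le
  · fun_prop
  · fun_prop
  · exact continuous_id
  · exact continuous_const
  · intro t ht
    subst ht
    have h1 : (q - c) / (t - c) * (t - c) = q - c := div_mul_cancel₀ _ (by linarith)
    have h2 : (d - q) / (d - t) * (t - t) = 0 := by ring
    rw [h1, h2]
    ring

/-- bump: `pl - id` on `[c,d]`, `0` outside. -/
noncomputable def bumpFn (c d p q t : ℝ) : ℝ :=
  if c ≤ t then (if t ≤ d then pl c d p q t - t else 0) else 0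

lemma bumpFn_of_mem {t : ℝ} (h1 : c ≤ t) (h2 : t ≤ d) :
    bumpFn c d p q t = pl c d p q t - t := by simp [bumpFn, h1, h2]

lemma bumpFn_of_not_mem {t : ℝ} (h : t ∉ Set.Icc c d) : bumpFn c d p q t = 0 := by
  rw [Set.mem_Icc, not_and_or] at h
  rcases h with h | h <;> simp [bumpFn, h]

lemma bumpFn_continuous (hcp : c < p) (hpd : p < d) : Continuous (bumpFn c d p q) := by
  have hcd : c ≤ d := by linarith
  have hinner : Continuous fun t => if t ≤ d then pl c d p q t - t else 0 := by
    apply Continuous.if_le ((pl_continuous hcp hpd).sub continuous_id) continuous_const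
      continuous_id continuous_const
    intro t ht
    have ht' : t = d := ht
    subst ht'
    rw [Pi.sub_apply, pl_d hpd]; simp
  apply Continuous.if_le hinner continuous_const continuous_const continuous_id
  intro t ht
  have ht' : c = t := ht
  subst ht'
  rw [if_pos hcd, pl_c hcp]; ring


end SkoGlue

namespace SkoGlue2

lemma exists_glue_lam {k : ℕ} (c d p q : Fin k → ℝ)
    (hcp : ∀ i, c i < p i) (hpd : ∀ i, p i < d i)
    (hcq : ∀ i, c i < q i) (hqd : ∀ i, q i < d i)
    (hc0 : ∀ i, 0 < c i) (hd1 : ∀ i, d i < 1)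
    (hdisj : ∀ i j, i ≠ j → d i < c j ∨ d j < c i)
    {η : ℝ} (hη : ∀ i, d i - c i ≤ η) (hη0 : 0 ≤ η) :
    ∃ lam : ℝ → ℝ, Continuous lam ∧ StrictMono lam ∧ lam 0 = 0 ∧ lam 1 = 1 ∧
      (∀ i, lam (p i) = q i) ∧ (∀ t, |lam t - t| ≤ η) := by
  classical
  set lam : ℝ → ℝ := fun t => t + ∑ i, SkoGlue.bumpFn (c i) (d i) (p i) (q i) t with hlam
  have hcd : ∀ i, c i ≤ d i := fun i => (hcp i).le.trans (hpd i).le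
  -- lam on an interval is pl
  have key : ∀ j t, t ∈ Set.Icc (c j) (d j) → lam t = SkoGlue.pl (c j) (d j) (p j) (q j) t := by
    intro j t ht
    have hsum : ∑ i, SkoGlue.bumpFn (c i) (d i) (p i) (q i) t
        = SkoGlue.bumpFn (c j) (d j) (p j) (q j) t := by
      apply Finset.sum_eq_single
      · intro l _ hlj
        apply SkoGlue.bumpFn_of_not_mem
        intro hl
        rcases hdisj l j hlj with h | h
        · exact absurd (ht.1.trans_lt' (hl.2.trans_lt h)) (lt_irrefl t)
        · exact absurd (hl.1.trans_lt' (ht.2.trans_lt h)) (lt_irrefl t)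
      · intro hj; exact absurd (Finset.mem_univ j) hj
    rw [hlam]
    simp only
    rw [hsum, SkoGlue.bumpFn_of_mem ht.1 ht.2]
    ring
  have key0 : ∀ t, (∀ j, t ∉ Set.Icc (c j) (d j)) → lam t = t := by
    intro t ht
    have : ∑ i, SkoGlue.bumpFn (c i) (d i) (p i) (q i) t = 0 :=
      Finset.sum_eq_zero fun i _ => SkoGlue.bumpFn_of_not_mem (ht i)
    rw [hlam]; simp only; rw [this]; ring
  have hmem : ∀ j t, t ∈ Set.Icc (c j) (d j) → lam t ∈ Set.Icc (c j) (d j) := by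
    intro j t ht
    rw [key j t ht]
    exact SkoGlue.pl_mem (hcp j) (hpd j) (hcq j) (hqd j) ht
  have hmono : StrictMono lam := by
    intro s t hst
    by_cases hs : ∃ j, s ∈ Set.Icc (c j) (d j)
    · obtain ⟨j, hsj⟩ := hs
      by_cases ht : ∃ l, t ∈ Set.Icc (c l) (d l)
      · obtain ⟨l, htl⟩ := ht
        by_cases hjl : j = l
        · subst hjl
          rw [key j s hsj, key j t htl]
          exact SkoGlue.pl_strictMonoOn (hcp j) (hpd j) (hcq j) (hqd j) hsj htl hst
        · have hdl : d j < c l := by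
            rcases hdisj j l hjl with h | h
            · exact h
            · exact absurd hst (not_lt.2 (htl.2.trans (h.le.trans hsj.1)))
          have h1 := (hmem j s hsj).2
          have h2 := (hmem l t htl).1
          linarith
      · push_neg at ht
        have htd : d j < t := by
          by_contra h
          push_neg at h
          exact ht j ⟨hsj.1.trans hst.le, h⟩
        have h1 := (hmem j s hsj).2
        rw [key0 t ht]
        linarith
    · push_neg at hs
      rw [key0 s hs]
      by_cases ht : ∃ l, t ∈ Set.Icc (c l) (d l)
      · obtain ⟨l, htl⟩ := ht
        have hsc : s < c l := by
          by_contra h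
          push_neg at h
          exact hs l ⟨h, hst.le.trans htl.2⟩
        have := (hmem l t htl).1
        linarith
      · push_neg at ht
        rw [key0 t ht]
        exact hst
  refine ⟨lam, ?_, hmono, ?_, ?_, ?_, ?_⟩
  · exact continuous_id.add (continuous_finset_sum _ fun i _ =>
      SkoGlue.bumpFn_continuous (hcp i) (hpd i))
  · exact key0 0 fun j h => absurd (hc0 j) (not_lt.2 h.1)
  · exact key0 1 fun j h => absurd (hd1 j) (not_lt.2 h.2)
  · intro i
    rw [key i (p i) ⟨(hcp i).le, (hpd i).le⟩]
    exact SkoGlue.pl_p (hcp i)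
  · intro t
    by_cases ht : ∃ j, t ∈ Set.Icc (c j) (d j)
    · obtain ⟨j, htj⟩ := ht
      have h := hmem j t htj
      rw [abs_le]
      constructor
      · have := hη j; have := h.1; have := htj.2; linarith
      · have := hη j; have := h.2; have := htj.1; linarith
    · push_neg at ht
      rw [key0 t ht]
      simpa using hη0

end SkoGlue2


namespace SkoGlue3

lemma abs_ciSup_sub_ciSup_le {ι : Sort*} [Nonempty ι] {a b : ι → ℝ} {A B cb : ℝ}
    (ha : ∀ i, a i ≤ A) (hb : ∀ i, b i ≤ B) (h : ∀ i, |a i - b i| ≤ cb) :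
    |(⨆ i, a i) - ⨆ i, b i| ≤ cb := by
  have hba : BddAbove (Set.range a) := ⟨A, Set.forall_mem_range.2 ha⟩
  have hbb : BddAbove (Set.range b) := ⟨B, Set.forall_mem_range.2 hb⟩
  rw [abs_sub_le_iff]
  constructor
  · rw [sub_le_iff_le_add, add_comm]
    apply ciSup_le
    intro i
    have := (abs_sub_le_iff.1 (h i)).1
    calc a i ≤ b i + cb := by linarith
    _ ≤ (⨆ i, b i) + cb := by gcongr; exact le_ciSup hbb i
  · rw [sub_le_iff_le_add, add_comm]
    apply ciSup_le
    intro i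
    have := (abs_sub_le_iff.1 (h i)).2
    calc b i ≤ a i + cb := by linarith
    _ ≤ (⨆ i, a i) + cb := by gcongr; exact le_ciSup hba i

lemma image_Icc_of_mono {lam : ℝ → ℝ} (hc : Continuous lam) (hm : StrictMono lam)
    {a b : ℝ} (hab : a ≤ b) : lam '' Set.Icc a b = Set.Icc (lam a) (lam b) := by
  apply Set.Subset.antisymm
  · rintro y ⟨z, hz, rfl⟩
    exact ⟨hm.monotone hz.1, hm.monotone hz.2⟩
  · exact intermediate_value_Icc hab hc.continuousOn

lemma iSup_reindex {G lam : ℝ → ℝ} {a b : ℝ} (hc : Continuous lam) (hm : StrictMono lam)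
    (hab : a ≤ b) :
    (⨆ s : Set.Icc (lam a) (lam b), G s.1) = ⨆ s : Set.Icc a b, G (lam s.1) := by
  calc (⨆ s : Set.Icc (lam a) (lam b), G s.1)
      = sSup (G '' Set.Icc (lam a) (lam b)) := (sSup_image').symm
    _ = sSup ((fun x => G (lam x)) '' Set.Icc a b) := by
        rw [← image_Icc_of_mono hc hm hab, Set.image_image]
    _ = ⨆ s : Set.Icc a b, G (lam s.1) := sSup_image'

end SkoGlue3


namespace SkoGlue4
lemma exists_delta0 {k : ℕ} (u : Fin k → ℝ) (hu : ∀ i, u i ∈ Set.Ioo (0:ℝ) 1)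
    (huinj : Function.Injective u) :
    ∃ δ0 : ℝ, 0 < δ0 ∧ ∀ i, δ0 ≤ u i / 2 ∧ δ0 ≤ (1 - u i) / 2 ∧
      ∀ j, j ≠ i → 3 * δ0 ≤ |u i - u j| := by
  classical
  set T : Finset ℝ := insert 1 ((Finset.univ.image fun i => u i / 2) ∪
      (Finset.univ.image fun i => (1 - u i) / 2) ∪
      ((Finset.univ ×ˢ Finset.univ).filter fun pr : Fin k × Fin k => pr.1 ≠ pr.2).image
        fun pr => |u pr.1 - u pr.2| / 3) with hT
  have hne : T.Nonempty := ⟨1, Finset.mem_insert_self _ _⟩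
  have hpos0 : 0 < T.min' hne := by
      rw [Finset.lt_min'_iff]
      intro a ha
      rw [hT] at ha
      simp only [Finset.mem_insert, Finset.mem_union, Finset.mem_image, Finset.mem_filter,
        Finset.mem_univ, true_and, Finset.mem_product] at ha
      rcases ha with rfl | ((⟨i, rfl⟩ | ⟨i, rfl⟩) | ⟨pr, hpr, rfl⟩)
      · norm_num
      · have := (hu i).1; linarith
      · have := (hu i).2; linarith
      · have : u pr.1 ≠ u pr.2 := fun h => hpr (huinj h)
        have := abs_pos.2 (sub_ne_zero.2 this)
        linarith
  refine ⟨T.min' hne / 3, by linarith, ?_⟩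
  intro i
  have h1 : T.min' hne ≤ u i / 2 := by
    apply Finset.min'_le
    rw [hT]
    simp only [Finset.mem_insert, Finset.mem_union, Finset.mem_image, Finset.mem_univ, true_and]
    exact Or.inr (Or.inl (Or.inl ⟨i, rfl⟩))
  have h2 : T.min' hne ≤ (1 - u i) / 2 := by
    apply Finset.min'_le
    rw [hT]
    simp only [Finset.mem_insert, Finset.mem_union, Finset.mem_image, Finset.mem_univ, true_and]
    exact Or.inr (Or.inl (Or.inr ⟨i, rfl⟩))
  have hpos : 0 < u i / 2 := by have := (hu i).1; linarith
  refine ⟨by linarith, by linarith, ?_⟩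
  intro j hji
  have h3 : T.min' hne ≤ |u i - u j| / 3 := by
    apply Finset.min'_le
    rw [hT]
    simp only [Finset.mem_insert, Finset.mem_union, Finset.mem_image, Finset.mem_filter,
      Finset.mem_univ, true_and, Finset.mem_product]
    exact Or.inr (Or.inr ⟨(i, j), fun h => hji.symm h, rfl⟩)
  linarith
end SkoGlue4


lemma SkoGlue3.iSup_reindex' {G lam : ℝ → ℝ} {a b a' : ℝ} (hc : Continuous lam)
    (hm : StrictMono lam) (hab : a ≤ b) (ha : lam a = a') :
    (⨆ s : Set.Icc a' (lam b), G s.1) = ⨆ s : Set.Icc a b, G (lam s.1) := by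
  subst ha; exact SkoGlue3.iSup_reindex hc hm hab

lemma skorohodDist_nonneg (f g : ℝ → ℝ) : 0 ≤ skorohodDist f g := by
  apply Real.sInf_nonneg
  rintro r ⟨l, -, -, -, rfl⟩
  exact le_trans (Real.iSup_nonneg fun s => abs_nonneg _) (le_max_left _ _)

lemma skorohodDist_le (f g : ℝ → ℝ) {lam : ℝ → ℝ}
    (h1 : ContinuousOn lam (Set.Icc 0 1)) (h2 : StrictMonoOn lam (Set.Icc 0 1))
    (h3 : Set.BijOn lam (Set.Icc 0 1) (Set.Icc 0 1)) :
    skorohodDist f g ≤ max (⨆ s : Set.Icc (0:ℝ) 1, |lam s.1 - s.1|)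
      (⨆ s : Set.Icc (0:ℝ) 1, |f s.1 - g (lam s.1)|) := by
  apply csInf_le
  · refine ⟨0, ?_⟩
    rintro r ⟨l, -, -, -, rfl⟩
    exact le_trans (Real.iSup_nonneg fun s => abs_nonneg _) (le_max_left _ _)
  · exact ⟨lam, h1, h2, h3, rfl⟩

/-- Sequential continuity, in the Skorohod `J1` metric, of the map gluing `k` positive
shots at pairwise distinct locations in `(0,1)` onto a continuous path and taking the
running maximum: if `x^{(n)} → x` uniformly on `[0,1]`, `y_i^{(n)} → y_i` and
`u_i^{(n)} → u_i`, then `d(h^{(n)}, h) → 0`, where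
`h(t) = sup_{s ∈ [0,t]} (x(s) + Σ_{i=1}^k y_i 1{s = u_i})` and similarly for `h^{(n)}`. -/
theorem skorohod_continuity_of_glued_running_max
    (k : ℕ) (x : ℝ → ℝ) (hx : ContinuousOn x (Set.Icc 0 1))
    (y : Fin k → ℝ) (hy : ∀ i, 0 < y i)
    (u : Fin k → ℝ) (hu : ∀ i, u i ∈ Set.Ioo (0:ℝ) 1) (huinj : Function.Injective u)
    (xn : ℕ → ℝ → ℝ) (hxn : ∀ n, Cadlag01 (xn n))
    (hxconv : TendstoUniformlyOn xn x atTop (Set.Icc 0 1))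
    (yn : ℕ → Fin k → ℝ) (hyn : ∀ n i, 0 < yn n i)
    (un : ℕ → Fin k → ℝ) (hun : ∀ n i, un n i ∈ Set.Ioo (0:ℝ) 1)
    (huninj : ∀ n, Function.Injective (un n))
    (hyconv : ∀ i, Tendsto (fun n => yn n i) atTop (𝓝 (y i)))
    (huconv : ∀ i, Tendsto (fun n => un n i) atTop (𝓝 (u i))) :
    Tendsto (fun n => skorohodDist
        (fun t => ⨆ s : Set.Icc (0:ℝ) t, (xn n s.1 + ∑ i, if s.1 = un n i then yn n i else 0))
        (fun t => ⨆ s : Set.Icc (0:ℝ) t, (x s.1 + ∑ i, if s.1 = u i then y i else 0)))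
      atTop (𝓝 0) := by
  classical
  haveI : Nonempty (Set.Icc (0:ℝ) 1) := ⟨⟨0, by norm_num⟩⟩
  rw [Metric.tendsto_nhds]
  intro ε hε
  obtain ⟨M, hM⟩ := isCompact_Icc.exists_bound_of_continuousOn hx
  obtain ⟨δuc, hδuc0, hδuc⟩ := Metric.uniformContinuousOn_iff.1
    (isCompact_Icc.uniformContinuousOn_of_continuous hx) (ε/4) (by linarith)
  obtain ⟨δ0, hδ00, hδ0⟩ := SkoGlue4.exists_delta0 u hu huinj
  set δ : ℝ := min δ0 (min (ε/8) (δuc/3)) with hδdef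
  have hδpos : 0 < δ := lt_min hδ00 (lt_min (by linarith) (by linarith))
  have hδ1 : δ ≤ δ0 := min_le_left _ _
  have hδ2 : δ ≤ ε/8 := (min_le_right _ _).trans (min_le_left _ _)
  have hδ3 : δ ≤ δuc/3 := (min_le_right _ _).trans (min_le_right _ _)
  have hE1 := Metric.tendstoUniformlyOn_iff.1 hxconv (min 1 (ε/4))
    (lt_min one_pos (by linarith))
  have hE2 : ∀ᶠ n in atTop, ∀ i, |yn n i - y i| < min 1 (ε/(4*((k:ℝ)+1))) := by
    rw [eventually_all]
    intro i
    have hp : (0:ℝ) < ε/(4*((k:ℝ)+1)) := div_pos hε (by positivity)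
    have := Metric.tendsto_nhds.1 (hyconv i) (min 1 (ε/(4*((k:ℝ)+1)))) (lt_min one_pos hp)
    simpa [Real.dist_eq] using this
  have hE3 : ∀ᶠ n in atTop, ∀ i, |un n i - u i| < δ := by
    rw [eventually_all]
    intro i
    have := Metric.tendsto_nhds.1 (huconv i) δ hδpos
    simpa [Real.dist_eq] using this
  filter_upwards [hE1, hE2, hE3] with n h1 h2 h3
  obtain ⟨lam, hcont, hmono, hl0, hl1, hlp, hldist⟩ :=
    SkoGlue2.exists_glue_lam (fun i => u i - δ) (fun i => u i + δ) (un n) u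
      (fun i => by have := (abs_lt.1 (h3 i)).1; linarith)
      (fun i => by have := (abs_lt.1 (h3 i)).2; linarith)
      (fun i => by linarith)
      (fun i => by linarith)
      (fun i => by have := (hδ0 i).1; have := (hu i).1; linarith)
      (fun i => by have := (hδ0 i).2.1; have := (hu i).2; linarith)
      (fun i j hij => by
        have h3d := (hδ0 i).2.2 j (Ne.symm hij)
        rcases le_or_gt (u i) (u j) with h | h
        · left
          rw [abs_of_nonpos (by linarith)] at h3d
          linarith
        · right
          rw [abs_of_nonneg (by linarith)] at h3d
          linarith)
      (η := 2*δ) (fun i => le_of_eq (by ring)) (by linarith)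
  have hmaps : Set.MapsTo lam (Set.Icc 0 1) (Set.Icc 0 1) := by
    intro t ht
    exact ⟨by rw [← hl0]; exact hmono.monotone ht.1,
           by rw [← hl1]; exact hmono.monotone ht.2⟩
  have hbij : Set.BijOn lam (Set.Icc 0 1) (Set.Icc 0 1) := by
    refine ⟨hmaps, hmono.injective.injOn, ?_⟩
    intro z hz
    rw [SkoGlue3.image_Icc_of_mono hcont hmono zero_le_one, hl0, hl1]
    exact hz
  rw [Real.dist_eq, sub_zero, abs_of_nonneg (skorohodDist_nonneg _ _)]
  apply lt_of_le_of_lt (skorohodDist_le _ _ hcont.continuousOn (hmono.strictMonoOn _) hbij)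
  have key : ∀ s : Set.Icc (0:ℝ) 1,
      |(⨆ s' : Set.Icc (0:ℝ) s.1, (xn n s'.1 + ∑ i, if s'.1 = un n i then yn n i else 0)) -
        ⨆ s' : Set.Icc (0:ℝ) (lam s.1), (x s'.1 + ∑ i, if s'.1 = u i then y i else 0)|
      ≤ 3*(ε/4) := by
    intro s
    haveI : Nonempty (Set.Icc (0:ℝ) s.1) := ⟨⟨0, le_refl 0, s.2.1⟩⟩
    have hrw : (⨆ s' : Set.Icc (0:ℝ) (lam s.1), (x s'.1 + ∑ i, if s'.1 = u i then y i else 0))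
        = ⨆ s' : Set.Icc (0:ℝ) s.1, (x (lam s'.1) + ∑ i, if lam s'.1 = u i then y i else 0) :=
      SkoGlue3.iSup_reindex' (G := fun v => x v + ∑ i, if v = u i then y i else 0)
        hcont hmono s.2.1 hl0
    rw [hrw]
    apply SkoGlue3.abs_ciSup_sub_ciSup_le (A := M + 1 + ∑ i, (y i + 1))
      (B := M + ∑ i, (y i + 1))
    · intro s'
      have hs'1 : s'.1 ∈ Set.Icc (0:ℝ) 1 := ⟨s'.2.1, s'.2.2.trans s.2.2⟩
      have hxb : |x s'.1| ≤ M := by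
        have := hM s'.1 hs'1; rwa [Real.norm_eq_abs] at this
      have hxb' := (abs_le.1 hxb).2
      have hxnb : xn n s'.1 ≤ M + 1 := by
        have hd := h1 s'.1 hs'1
        rw [Real.dist_eq] at hd
        have := (abs_lt.1 (hd.trans_le (min_le_left _ _))).1
        linarith
      have hsum : (∑ i, if s'.1 = un n i then yn n i else 0) ≤ ∑ i, (y i + 1) := by
        apply Finset.sum_le_sum
        intro i _
        have h2i := (abs_lt.1 ((h2 i).trans_le (min_le_left _ _))).2
        split_ifs
        · linarith
        · have := hy i; linarith
      linarith
    · intro s'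
      have hls' : lam s'.1 ∈ Set.Icc (0:ℝ) 1 := hmaps ⟨s'.2.1, s'.2.2.trans s.2.2⟩
      have hxb : |x (lam s'.1)| ≤ M := by
        have := hM (lam s'.1) hls'; rwa [Real.norm_eq_abs] at this
      have hxb' := (abs_le.1 hxb).2
      have hsum : (∑ i, if lam s'.1 = u i then y i else 0) ≤ ∑ i, (y i + 1) := by
        apply Finset.sum_le_sum
        intro i _
        split_ifs
        · linarith
        · have := hy i; linarith
      linarith
    · intro s'
      have hv1 : s'.1 ∈ Set.Icc (0:ℝ) 1 := ⟨s'.2.1, s'.2.2.trans s.2.2⟩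
      have hlv1 : lam s'.1 ∈ Set.Icc (0:ℝ) 1 := hmaps hv1
      have hind : (∑ i, if lam s'.1 = u i then y i else 0)
          = ∑ i, if s'.1 = un n i then y i else 0 := by
        apply Finset.sum_congr rfl
        intro i _
        apply if_congr _ rfl rfl
        constructor
        · intro h; exact hmono.injective (by rw [hlp i, h])
        · intro h; rw [h, hlp i]
      have hsub : (∑ i, if s'.1 = un n i then yn n i else 0) -
          (∑ i, if s'.1 = un n i then y i else 0)
          = ∑ i, if s'.1 = un n i then yn n i - y i else 0 := by
        rw [← Finset.sum_sub_distrib]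
        apply Finset.sum_congr rfl
        intro i _
        split_ifs <;> ring
      have hsumb : |∑ i, if s'.1 = un n i then yn n i - y i else 0| ≤ ε/4 := by
        have hk1 : (0:ℝ) < (k:ℝ) + 1 := by positivity
        calc |∑ i, if s'.1 = un n i then yn n i - y i else 0|
            ≤ ∑ i, |if s'.1 = un n i then yn n i - y i else 0| :=
              Finset.abs_sum_le_sum_abs _ _
          _ ≤ ∑ _i : Fin k, ε/(4*((k:ℝ)+1)) := by
              apply Finset.sum_le_sum
              intro i _
              have hb := ((h2 i).trans_le (min_le_right _ _)).le
              split_ifs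
              · exact hb
              · rw [abs_zero]; positivity
          _ = (k:ℝ) * (ε/(4*((k:ℝ)+1))) := by
              rw [Finset.sum_const, Finset.card_univ, Fintype.card_fin, nsmul_eq_mul]
          _ ≤ ε/4 := by
              rw [mul_div_assoc', div_le_div_iff₀ (by positivity) (by norm_num)]
              have hk0 : (0:ℝ) ≤ (k:ℝ) := Nat.cast_nonneg k
              nlinarith
      have hx1 : |xn n s'.1 - x s'.1| < ε/4 := by
        have hd := h1 s'.1 hv1
        rw [Real.dist_eq, abs_sub_comm] at hd
        exact hd.trans_le (min_le_right _ _)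
      have hx2 : |x s'.1 - x (lam s'.1)| < ε/4 := by
        have hdis : dist s'.1 (lam s'.1) < δuc := by
          rw [Real.dist_eq, abs_sub_comm]
          have := hldist s'.1
          linarith
        exact (Real.dist_eq _ _) ▸ hδuc s'.1 hv1 (lam s'.1) hlv1 hdis
      have heq : (xn n s'.1 + ∑ i, if s'.1 = un n i then yn n i else 0) -
          (x (lam s'.1) + ∑ i, if lam s'.1 = u i then y i else 0)
          = (xn n s'.1 - x s'.1) + (x s'.1 - x (lam s'.1)) +
            ∑ i, if s'.1 = un n i then yn n i - y i else 0 := by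
        rw [hind, ← hsub]; ring
      rw [heq]
      calc |(xn n s'.1 - x s'.1) + (x s'.1 - x (lam s'.1)) +
            ∑ i, if s'.1 = un n i then yn n i - y i else 0|
          ≤ |(xn n s'.1 - x s'.1) + (x s'.1 - x (lam s'.1))| +
            |∑ i, if s'.1 = un n i then yn n i - y i else 0| := abs_add_le _ _
        _ ≤ |xn n s'.1 - x s'.1| + |x s'.1 - x (lam s'.1)| +
            |∑ i, if s'.1 = un n i then yn n i - y i else 0| := by
              have := abs_add_le (xn n s'.1 - x s'.1) (x s'.1 - x (lam s'.1))
              linarith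
        _ ≤ 3*(ε/4) := by linarith
  apply max_lt
  · exact lt_of_le_of_lt (ciSup_le fun s => hldist s.1) (by linarith)
  · exact lt_of_le_of_lt (ciSup_le fun s => key s) (by linarith)
end
end

section
/- Let m ∈ ℕ, let S_0, S_1, …, S_m and Y_0, Y_1, …, Y_m be real numbers with Y_0 ≥ 0. For 0 ≤ j ≤ m let τ(j) = max{ i ≤ j : Y_i ≥ 0 } (well defined since Y_0 ≥ 0). Then max_{0≤j≤m} ( S_j + max(Y_j, 0) ) ≤ max_{0≤j≤m, Y_j ≥ 0} ( S_j + Y_j ) + max_{0≤j≤m} ( S_j − S_{τ(j)} ). -/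
/-- Let `Y_0 ≥ 0` and, for `0 ≤ j ≤ m`, let `τ(j) = max{i ≤ j : Y_i ≥ 0}`. Then
`max_{0≤j≤m} (S_j + max(Y_j,0))
  ≤ max_{0≤j≤m, Y_j≥0} (S_j + Y_j) + max_{0≤j≤m} (S_j - S_{τ(j)})`. -/
theorem zero_truncation_bounded_by_gap_fluctuation
    (m : ℕ) (S Y : Fin (m+1) → ℝ) (hY0 : 0 ≤ Y 0)
    (τ : Fin (m+1) → Fin (m+1))
    (hτ : ∀ j, τ j ≤ j ∧ 0 ≤ Y (τ j) ∧ ∀ i, i ≤ j → 0 ≤ Y i → i ≤ τ j) :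
    (⨆ j : Fin (m+1), (S j + max (Y j) 0)) ≤
      (⨆ j : {j : Fin (m+1) // 0 ≤ Y j}, (S j.1 + Y j.1)) +
        ⨆ j : Fin (m+1), (S j - S (τ j)) := by
  have hbdd1 : BddAbove (Set.range fun j : {j : Fin (m+1) // 0 ≤ Y j} => S j.1 + Y j.1) :=
    (Set.finite_range _).bddAbove
  have hbdd2 : BddAbove (Set.range fun j : Fin (m+1) => S j - S (τ j)) :=
    (Set.finite_range _).bddAbove
  apply ciSup_le
  intro j
  rcases le_or_gt 0 (Y j) with h | h
  · have h1 : S j + Y j ≤ ⨆ j : {j : Fin (m+1) // 0 ≤ Y j}, (S j.1 + Y j.1) :=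
      le_ciSup hbdd1 ⟨j, h⟩
    have hτ0 : τ 0 = 0 := le_antisymm (hτ 0).1 (Fin.zero_le _)
    have h2 : (0 : ℝ) ≤ ⨆ j : Fin (m+1), (S j - S (τ j)) := by
      have := le_ciSup hbdd2 (0 : Fin (m+1))
      rw [hτ0] at this
      simpa using this
    rw [max_eq_left h]
    linarith
  · have h1 : S (τ j) + Y (τ j) ≤ ⨆ j : {j : Fin (m+1) // 0 ≤ Y j}, (S j.1 + Y j.1) :=
      le_ciSup hbdd1 ⟨τ j, (hτ j).2.1⟩
    have h2 : S j - S (τ j) ≤ ⨆ j : Fin (m+1), (S j - S (τ j)) :=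
      le_ciSup hbdd2 j
    have h3 : 0 ≤ Y (τ j) := (hτ j).2.1
    rw [max_eq_right h.le]
    linarith
end
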